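/- arXiv:2509.25253 — 2 statements merged into one kernel-verified Lean document; each statement's English description precedes it below -/
import Mathlib

section
/- Let R_s ∈ ℝ^{n×d_s} and R_t ∈ ℝ^{n×d_t} satisfy R_sR_sᵀ = R_tR_tᵀ. Then the nuclear norm ‖R_sᵀR_t‖_* equals tr(R_sR_sᵀ), and consequently the kernel Procrustes distance tr(R_sR_sᵀ) + tr(R_tR_tᵀ) − 2‖R_sᵀR_t‖_* equals 0. -/
open Matrix

noncomputable def nuclearNorm {m p : ℕ} (M : Matrix (Fin m) (Fin p) ℝ) : ℝ :=
  ∑ i, Real.sqrt ((Matrix.posSemidef_conjTranspose_mul_self M).1.eigenvalues i)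

noncomputable def frob {m p : ℕ} (M : Matrix (Fin m) (Fin p) ℝ) : ℝ :=
  Real.sqrt (∑ i, ∑ j, (M i j)^2)

open scoped MatrixOrder in
lemma trace_sqrt {k : ℕ} {B : Matrix (Fin k) (Fin k) ℝ} (hB : B.PosSemidef) :
    (CFC.sqrt B).trace = ∑ i, Real.sqrt (hB.1.eigenvalues i) := by
  rw [CFC.sqrt_eq_cfc, cfc_nnreal_eq_real _ B, hB.1.cfc_eq, IsHermitian.cfc,
    Unitary.conjStarAlgAut_apply, trace_mul_cycle,
    Unitary.coe_star_mul_self hB.1.eigenvectorUnitary, one_mul, trace_diagonal]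
  simp [hB.eigenvalues_nonneg]

lemma ct_eq {a b : ℕ} (B : Matrix (Fin a) (Fin b) ℝ) : Bᴴ = Bᵀ := by
  ext i j; simp [conjTranspose]

theorem gram_eq_implies_procrustes_zero {n ds dt : ℕ}
    (Rs : Matrix (Fin n) (Fin ds) ℝ) (Rt : Matrix (Fin n) (Fin dt) ℝ)
    (h : Rs * Rsᵀ = Rt * Rtᵀ) :
    nuclearNorm (Rsᵀ * Rt) = (Rs * Rsᵀ).trace ∧
      (Rs * Rsᵀ).trace + (Rt * Rtᵀ).trace - 2 * nuclearNorm (Rsᵀ * Rt) = 0 := by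
  have hB := Matrix.posSemidef_conjTranspose_mul_self (Rsᵀ * Rt)
  have hA : (Rtᵀ * Rt).PosSemidef := by
    have := Matrix.posSemidef_conjTranspose_mul_self Rt
    rwa [ct_eq] at this
  have hsq : (Rtᵀ * Rt) ^ 2 = (Rsᵀ * Rt)ᴴ * (Rsᵀ * Rt) := by
    rw [ct_eq, transpose_mul, transpose_transpose, pow_two]
    have h2 : Rtᵀ * (Rs * Rsᵀ) * Rt = Rtᵀ * (Rt * Rtᵀ) * Rt := by rw [h]
    simp only [Matrix.mul_assoc] at h2 ⊢
    exact h2.symm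
  have key : nuclearNorm (Rsᵀ * Rt) = (Rs * Rsᵀ).trace := by
    open scoped MatrixOrder in
    have h1 : nuclearNorm (Rsᵀ * Rt) = (CFC.sqrt ((Rsᵀ * Rt)ᴴ * (Rsᵀ * Rt))).trace := (trace_sqrt hB).symm
    open scoped MatrixOrder in
    rw [h1, (CFC.sqrt_eq_iff ((Rsᵀ * Rt)ᴴ * (Rsᵀ * Rt)) (Rtᵀ * Rt) hB.nonneg hA.nonneg).mpr (by rw [← hsq, pow_two]), trace_mul_comm, h, trace_mul_comm]
  exact ⟨key, by rw [key, h]; ring⟩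
end

section
/- For matrices R_s ∈ ℝ^{n×d_s} and R_t ∈ ℝ^{n×d_t}, the kernel Procrustes distance D_P² = tr(R_tR_tᵀ) + tr(R_sR_sᵀ) − 2‖R_sᵀR_t‖_* is zero if and only if the Gram matrices are equal: R_sR_sᵀ = R_tR_tᵀ. -/
open Matrix

/-- `(A *ᵥ x) ⬝ᵥ q = x ⬝ᵥ (Aᵀ *ᵥ q)` -/
private lemma mulVec_dot {a b : ℕ} (A : Matrix (Fin a) (Fin b) ℝ) (x : Fin b → ℝ)
    (q : Fin a → ℝ) : (A *ᵥ x) ⬝ᵥ q = x ⬝ᵥ (Aᵀ *ᵥ q) := by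
  rw [dotProduct_comm, dotProduct_mulVec, ← mulVec_transpose, dotProduct_comm]

/-- trace as a sum over a family with orthonormal rows -/
private lemma trace_eq_sum_rows {k : ℕ} (v : Fin k → Fin k → ℝ)
    (h_rows : ∀ j l, (∑ i, v i j * v i l) = if j = l then 1 else 0)
    (G : Matrix (Fin k) (Fin k) ℝ) :
    ∑ i, v i ⬝ᵥ (G *ᵥ v i) = G.trace := by
  have : ∑ i, v i ⬝ᵥ (G *ᵥ v i) = ∑ j, ∑ l, G j l * ∑ i, v i j * v i l := by
    simp only [dotProduct, mulVec, Finset.mul_sum]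
    rw [Finset.sum_comm]
    refine Finset.sum_congr rfl fun j _ => ?_
    rw [Finset.sum_comm]
    refine Finset.sum_congr rfl fun l _ => ?_
    exact Finset.sum_congr rfl fun i _ => by ring
  rw [this]
  simp [h_rows, trace, diag]

/-- Parseval-type identity for a family with orthonormal rows -/
private lemma sum_dot_mul_dot {k : ℕ} (v : Fin k → Fin k → ℝ)
    (h_rows : ∀ j l, (∑ i, v i j * v i l) = if j = l then 1 else 0)
    (a b : Fin k → ℝ) :
    ∑ i, (a ⬝ᵥ v i) * (b ⬝ᵥ v i) = a ⬝ᵥ b := by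
  have h2 : ∀ i, (a ⬝ᵥ v i) * (b ⬝ᵥ v i) = ∑ j, ∑ l, (a j * b l) * (v i j * v i l) := by
    intro i
    rw [dotProduct, dotProduct, Finset.sum_mul_sum]
    exact Finset.sum_congr rfl fun j _ => Finset.sum_congr rfl fun l _ => by ring
  have h1 : ∑ i, (a ⬝ᵥ v i) * (b ⬝ᵥ v i) = ∑ j, ∑ l, (a j * b l) * ∑ i, v i j * v i l := by
    rw [Finset.sum_congr rfl fun i _ => h2 i, Finset.sum_comm]
    refine Finset.sum_congr rfl fun j _ => ?_
    rw [Finset.sum_comm]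
    exact Finset.sum_congr rfl fun l _ => by rw [Finset.mul_sum]
  rw [h1]
  simp only [h_rows, mul_ite, mul_one, mul_zero, Finset.sum_ite_eq, Finset.mem_univ, if_true]
  rfl

private lemma dot_sum_smul {a k : ℕ} (x : Fin a → ℝ) (c : Fin k → ℝ) (u : Fin k → Fin a → ℝ) :
    x ⬝ᵥ (∑ i, c i • u i) = ∑ i, c i * (x ⬝ᵥ u i) := by
  simp only [dotProduct, Finset.sum_apply, Pi.smul_apply, smul_eq_mul, Finset.mul_sum]
  rw [Finset.sum_comm]
  exact Finset.sum_congr rfl fun i _ => Finset.sum_congr rfl fun q _ => by ring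

private lemma sum_smul_dot {a k : ℕ} (c : Fin k → ℝ) (u : Fin k → Fin a → ℝ) (x : Fin a → ℝ) :
    (∑ i, c i • u i) ⬝ᵥ x = ∑ i, c i * (u i ⬝ᵥ x) := by
  rw [dotProduct_comm, dot_sum_smul]
  exact Finset.sum_congr rfl fun i _ => by rw [dotProduct_comm]

private lemma dot_self_nonneg {a : ℕ} (x : Fin a → ℝ) : 0 ≤ x ⬝ᵥ x :=
  Finset.sum_nonneg fun _ _ => mul_self_nonneg _

theorem procrustes_zero_iff_gram_eq {n ds dt : ℕ}
    (Rs : Matrix (Fin n) (Fin ds) ℝ) (Rt : Matrix (Fin n) (Fin dt) ℝ) :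
    (Rt * Rtᵀ).trace + (Rs * Rsᵀ).trace - 2 * nuclearNorm (Rsᵀ * Rt) = 0 ↔
      Rs * Rsᵀ = Rt * Rtᵀ := by
  classical
  set M := Rsᵀ * Rt with hMdef
  have hPSD : (Mᵀ * M).PosSemidef := Matrix.posSemidef_conjTranspose_mul_self M
  set lam : Fin dt → ℝ := hPSD.1.eigenvalues with hlamdef
  set v : Fin dt → Fin dt → ℝ := fun i => ⇑(hPSD.1.eigenvectorBasis i) with hvdef
  have hlam0 : ∀ i, 0 ≤ lam i := hPSD.eigenvalues_nonneg
  have h_eig : ∀ i, (Mᵀ * M) *ᵥ v i = lam i • v i := fun i => hPSD.1.mulVec_eigenvectorBasis i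
  have h_on : ∀ i j, v i ⬝ᵥ v j = if i = j then 1 else 0 := by
    intro i j
    have h := orthonormal_iff_ite.mp hPSD.1.eigenvectorBasis.orthonormal i j
    simpa [hvdef, PiLp.inner_apply, RCLike.inner_apply, dotProduct, mul_comm] using h
  have h_rows : ∀ j l, (∑ i, v i j * v i l) = if j = l then 1 else 0 := by
    intro j l
    have h := hPSD.1.eigenvectorBasis.sum_inner_mul_inner (EuclideanSpace.single j (1:ℝ))
      (EuclideanSpace.single l 1)
    simpa [hvdef, EuclideanSpace.inner_single_left, EuclideanSpace.inner_single_right,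
      EuclideanSpace.single_apply, eq_comm] using h
  set σ : Fin dt → ℝ := fun i => Real.sqrt (lam i) with hσdef
  have hσsq : ∀ i, σ i ^ 2 = lam i := fun i => Real.sq_sqrt (hlam0 i)
  have hnuc : nuclearNorm M = ∑ i, σ i := rfl
  set y : Fin dt → Fin n → ℝ := fun i => Rt *ᵥ v i with hydef
  set w : Fin dt → Fin ds → ℝ := fun i => Rsᵀ *ᵥ y i with hwdef
  have hwM : ∀ i, w i = M *ᵥ v i := by
    intro i
    show Rsᵀ *ᵥ (Rt *ᵥ v i) = M *ᵥ v i
    rw [hMdef, ← mulVec_mulVec]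
  have hww : ∀ i j, w i ⬝ᵥ w j = if i = j then lam i else 0 := by
    intro i j
    rw [hwM i, hwM j, mulVec_dot, mulVec_mulVec, h_eig j, dotProduct_smul, h_on i j,
      smul_eq_mul]
    split_ifs with h
    · subst h; ring
    · ring
  set u : Fin dt → Fin ds → ℝ := fun i => (σ i)⁻¹ • w i with hudef
  have hw0 : ∀ i, lam i = 0 → w i = 0 := by
    intro i h
    have h2 := hww i i
    simp only [if_pos rfl, h] at h2
    exact dotProduct_self_eq_zero.mp h2
  have hu0 : ∀ i, lam i = 0 → u i = 0 := by
    intro i h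
    show (σ i)⁻¹ • w i = 0
    rw [hw0 i h, smul_zero]
  have hσne : ∀ i, lam i ≠ 0 → σ i ≠ 0 := by
    intro i h
    exact Real.sqrt_ne_zero'.mpr (lt_of_le_of_ne (hlam0 i) (Ne.symm h))
  have huu : ∀ i j, u i ⬝ᵥ u j = if i = j then (if lam i = 0 then 0 else 1) else 0 := by
    intro i j
    show ((σ i)⁻¹ • w i) ⬝ᵥ ((σ j)⁻¹ • w j) = _
    rw [smul_dotProduct, dotProduct_smul, hww i j, smul_eq_mul, smul_eq_mul]
    split_ifs with h h0
    · simp [h0]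
    · subst h
      have hne := hσne i h0
      rw [← hσsq i, pow_two]
      field_simp
    · ring
  set z : Fin dt → Fin n → ℝ := fun i => Rs *ᵥ u i with hzdef
  have hz0 : ∀ i, lam i = 0 → z i = 0 := by
    intro i h
    show Rs *ᵥ u i = 0
    rw [hu0 i h, mulVec_zero]
  have hzy : ∀ i, z i ⬝ᵥ y i = σ i := by
    intro i
    have e1 : z i ⬝ᵥ y i = u i ⬝ᵥ w i := by
      show (Rs *ᵥ u i) ⬝ᵥ y i = _
      rw [mulVec_dot]
    rw [e1]
    show ((σ i)⁻¹ • w i) ⬝ᵥ w i = σ i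
    rw [smul_dotProduct, hww i i, if_pos rfl, smul_eq_mul]
    by_cases h : lam i = 0
    · simp [hσdef, h]
    · have hne := hσne i h
      rw [← hσsq i, pow_two, inv_mul_cancel_left₀ hne]
  have hzr : ∀ i p, z i p = Rs p ⬝ᵥ u i := fun i p => rfl
  -- traces
  have htrB : (Rt * Rtᵀ).trace = ∑ i, y i ⬝ᵥ y i := by
    rw [trace_mul_comm, ← trace_eq_sum_rows v h_rows (Rtᵀ * Rt)]
    refine (Finset.sum_congr rfl fun i _ => ?_).symm
    show (Rt *ᵥ v i) ⬝ᵥ (Rt *ᵥ v i) = v i ⬝ᵥ ((Rtᵀ * Rt) *ᵥ v i)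
    rw [mulVec_dot, mulVec_mulVec]
  have htrA : (Rs * Rsᵀ).trace = ∑ p, Rs p ⬝ᵥ Rs p := by
    simp [trace, diag, mul_apply, dotProduct, transpose_apply]
  -- the residual vectors
  set s : Fin n → Fin ds → ℝ := fun p => Rs p - ∑ i, z i p • u i with hsdef
  have hbu : ∀ (p : Fin n) (j : Fin dt),
      (∑ i, z i p • u i) ⬝ᵥ u j = z j p * (if lam j = 0 then 0 else 1) := by
    intro p j
    rw [sum_smul_dot]
    have h3 : ∀ i, z i p * (u i ⬝ᵥ u j) =
        if i = j then z j p * (if lam j = 0 then 0 else 1) else 0 := by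
      intro i
      rw [huu i j]
      by_cases h : i = j
      · subst h; simp
      · simp [h]
    rw [Finset.sum_congr rfl fun i _ => h3 i]
    simp
  have hzd : ∀ i (p : Fin n), z i p * (if lam i = 0 then 0 else 1) = z i p := by
    intro i p
    split_ifs with h
    · rw [hz0 i h]; simp
    · ring
  have hss : ∀ p, s p ⬝ᵥ s p = Rs p ⬝ᵥ Rs p - ∑ i, (z i p)^2 := by
    intro p
    have hab : Rs p ⬝ᵥ (∑ i, z i p • u i) = ∑ i, (z i p)^2 := by
      rw [dot_sum_smul]
      refine Finset.sum_congr rfl fun i _ => ?_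
      rw [← hzr i p]; ring
    have hbb : (∑ i, z i p • u i) ⬝ᵥ (∑ i, z i p • u i) = ∑ i, (z i p)^2 := by
      have h4 : ∀ j, z j p * ((∑ i, z i p • u i) ⬝ᵥ u j) = (z j p)^2 := by
        intro j
        rw [hbu p j, ← mul_assoc, mul_comm (z j p), mul_assoc, hzd j p]
        ring
      rw [dot_sum_smul]
      exact Finset.sum_congr rfl fun j _ => h4 j
    have e2 : s p ⬝ᵥ s p
        = Rs p ⬝ᵥ Rs p - Rs p ⬝ᵥ (∑ i, z i p • u i) - ((∑ i, z i p • u i) ⬝ᵥ Rs p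
          - (∑ i, z i p • u i) ⬝ᵥ (∑ i, z i p • u i)) := by
      show (Rs p - ∑ i, z i p • u i) ⬝ᵥ (Rs p - ∑ i, z i p • u i) = _
      rw [sub_dotProduct, dotProduct_sub, dotProduct_sub]
    rw [e2, hab, hbb, dotProduct_comm (∑ i, z i p • u i) (Rs p), hab]
    ring
  -- the key identity
  have hkey : (Rt * Rtᵀ).trace + (Rs * Rsᵀ).trace - 2 * nuclearNorm M
      = (∑ p, s p ⬝ᵥ s p) + ∑ i, (z i - y i) ⬝ᵥ (z i - y i) := by
    have hsub : ∀ i, (z i - y i) ⬝ᵥ (z i - y i) = z i ⬝ᵥ z i - 2 * σ i + y i ⬝ᵥ y i := by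
      intro i
      rw [sub_dotProduct, dotProduct_sub, dotProduct_sub, dotProduct_comm (y i) (z i), hzy i]
      ring
    have hswap : ∑ p, ∑ i, (z i p)^2 = ∑ i, z i ⬝ᵥ z i := by
      rw [Finset.sum_comm]
      exact Finset.sum_congr rfl fun i _ =>
        Finset.sum_congr rfl fun p _ => by rw [pow_two]
    rw [htrB, htrA, hnuc, Finset.sum_congr rfl fun p _ => hss p,
      Finset.sum_congr rfl fun i _ => hsub i, Finset.sum_sub_distrib, hswap,
      Finset.sum_add_distrib, Finset.sum_sub_distrib, ← Finset.mul_sum]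
    ring
  have hnn1 : 0 ≤ ∑ p, s p ⬝ᵥ s p := Finset.sum_nonneg fun p _ => dot_self_nonneg _
  have hnn2 : 0 ≤ ∑ i, (z i - y i) ⬝ᵥ (z i - y i) :=
    Finset.sum_nonneg fun i _ => dot_self_nonneg _
  constructor
  · -- forward direction
    intro h0
    rw [hkey] at h0
    have h1 : ∑ p, s p ⬝ᵥ s p = 0 := le_antisymm (by linarith) hnn1
    have h2 : ∑ i, (z i - y i) ⬝ᵥ (z i - y i) = 0 := le_antisymm (by linarith) hnn2
    have hs0 : ∀ p, s p = 0 := by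
      intro p
      have := (Finset.sum_eq_zero_iff_of_nonneg
        (fun p _ => dot_self_nonneg (s p))).mp h1 p (Finset.mem_univ p)
      exact dotProduct_self_eq_zero.mp this
    have hzy0 : ∀ i, z i = y i := by
      intro i
      have h5 := (Finset.sum_eq_zero_iff_of_nonneg
        (fun i _ => dot_self_nonneg (z i - y i))).mp h2 i (Finset.mem_univ i)
      exact sub_eq_zero.mp (dotProduct_self_eq_zero.mp h5)
    ext p q
    have hrp : ∀ p, Rs p = ∑ i, z i p • u i := by
      intro p
      have h6 : s p = 0 := hs0 p
      have h7 : Rs p - ∑ i, z i p • u i = 0 := h6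
      exact sub_eq_zero.mp h7
    have hApq : (Rs * Rsᵀ) p q = ∑ i, y i p * y i q := by
      have h3 : (Rs * Rsᵀ) p q = Rs p ⬝ᵥ Rs q := by
        simp [mul_apply, dotProduct, transpose_apply]
      rw [h3, hrp q, dot_sum_smul]
      have h4 : ∀ i, z i q * (Rs p ⬝ᵥ u i) = z i p * z i q := by
        intro i
        rw [hrp p, hbu p i, ← mul_assoc, mul_comm (z i q), mul_assoc, hzd i q]
      rw [Finset.sum_congr rfl fun i _ => h4 i]
      exact Finset.sum_congr rfl fun i _ => by rw [hzy0 i]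
    have hBpq : (Rt * Rtᵀ) p q = ∑ i, y i p * y i q := by
      have h5 : ∀ i, y i p * y i q = (Rt p ⬝ᵥ v i) * (Rt q ⬝ᵥ v i) := fun i => rfl
      rw [Finset.sum_congr rfl fun i _ => h5 i, sum_dot_mul_dot v h_rows]
      simp [mul_apply, dotProduct, transpose_apply]
    rw [hApq, hBpq]
  · -- backward direction
    intro hAB
    have hge : 0 ≤ (Rt * Rtᵀ).trace + (Rs * Rsᵀ).trace - 2 * nuclearNorm M := by
      rw [hkey]; exact add_nonneg hnn1 hnn2
    have htrAB : (Rs * Rsᵀ).trace = (Rt * Rtᵀ).trace := by rw [hAB]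
    have hCsymm : (Rtᵀ * Rt)ᵀ = Rtᵀ * Rt := by rw [transpose_mul, transpose_transpose]
    have hC2 : Mᵀ * M = (Rtᵀ * Rt) * (Rtᵀ * Rt) := by
      rw [hMdef, transpose_mul, transpose_transpose]
      calc Rtᵀ * Rs * (Rsᵀ * Rt) = Rtᵀ * (Rs * Rsᵀ) * Rt := by
            simp only [Matrix.mul_assoc]
        _ = Rtᵀ * (Rt * Rtᵀ) * Rt := by rw [hAB]
        _ = Rtᵀ * Rt * (Rtᵀ * Rt) := by simp only [Matrix.mul_assoc]
    have hCv : ∀ i, ((Rtᵀ * Rt) *ᵥ v i) ⬝ᵥ ((Rtᵀ * Rt) *ᵥ v i) = lam i := by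
      intro i
      rw [mulVec_dot, hCsymm, mulVec_mulVec, ← hC2, h_eig i, dotProduct_smul, h_on i i,
        smul_eq_mul]
      simp
    have hle : ∀ i, v i ⬝ᵥ ((Rtᵀ * Rt) *ᵥ v i) ≤ σ i := by
      intro i
      have hcs := Finset.sum_mul_sq_le_sq_mul_sq Finset.univ (v i) ((Rtᵀ * Rt) *ᵥ v i)
      have hv1 : ∑ k, (v i k)^2 = 1 := by
        have h8 := h_on i i
        rw [if_pos rfl] at h8
        calc ∑ k, (v i k)^2 = ∑ k, v i k * v i k :=
              Finset.sum_congr rfl fun k _ => by rw [pow_two]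
          _ = 1 := h8
      have hc1 : ∑ k, (((Rtᵀ * Rt) *ᵥ v i) k)^2 = lam i := by
        rw [← hCv i]
        exact Finset.sum_congr rfl fun k _ => by rw [pow_two]
      have h2 : (v i ⬝ᵥ ((Rtᵀ * Rt) *ᵥ v i))^2 ≤ lam i := by
        calc (v i ⬝ᵥ ((Rtᵀ * Rt) *ᵥ v i))^2
            ≤ (∑ k, (v i k)^2) * ∑ k, (((Rtᵀ * Rt) *ᵥ v i) k)^2 := hcs
          _ = lam i := by rw [hv1, hc1, one_mul]
      calc v i ⬝ᵥ ((Rtᵀ * Rt) *ᵥ v i) ≤ |v i ⬝ᵥ ((Rtᵀ * Rt) *ᵥ v i)| := le_abs_self _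
        _ = Real.sqrt ((v i ⬝ᵥ ((Rtᵀ * Rt) *ᵥ v i))^2) := (Real.sqrt_sq_eq_abs _).symm
        _ ≤ Real.sqrt (lam i) := Real.sqrt_le_sqrt h2
    have hsum : (Rt * Rtᵀ).trace ≤ ∑ i, σ i := by
      rw [trace_mul_comm, ← trace_eq_sum_rows v h_rows (Rtᵀ * Rt)]
      exact Finset.sum_le_sum fun i _ => hle i
    rw [hnuc]
    rw [hnuc] at hge
    linarith
end
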